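/- Let D be a complete, extremally co-well-powered, (extremal epi, mono) category. Then there is a functor K : QD → KD lifting the projective limit functor lim : QD → D (i.e., the underlying object of K(X,Q) is lim Q, with the filtration whose elements are the canonical morphisms lim Q → X_δ induced by the elements δ ∈ Q), which is left adjoint to the inclusion functor KD → QD; moreover the composition of K with the inclusion KD → QD is naturally isomorphic to the identity functor on KD. -/

import Mathlib

open CategoryTheory CategoryTheory.Limits

universe w v u v₂ u₂

namespace FilteredCats

variable {D : Type u} [Category.{v} D]

/-- The class of morphisms of `D` with source `X`. -/
def MorFrom (X : D) : Type (max u v) := Σ Y : D, X ⟶ Y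

/-- `Dom δ₁ δ₂` means `δ₁ ≥ δ₂`: there is `h` with `h ∘ δ₁ = δ₂`. -/
def Dom {X : D} (δ₁ δ₂ : MorFrom X) : Prop :=
  ∃ h : δ₁.1 ⟶ δ₂.1, δ₁.2 ≫ h = δ₂.2

/-- A projective filtration on `X`: a nonempty, directed, saturated class of
morphisms with source `X`. -/
structure ProjFilt (X : D) where
  carrier : Set (MorFrom X)
  nonempty' : carrier.Nonempty
  directed' : ∀ δ₁ ∈ carrier, ∀ δ₂ ∈ carrier, ∃ δ ∈ carrier, Dom δ δ₁ ∧ Dom δ δ₂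
  saturated' : ∀ δ₁ ∈ carrier, ∀ δ₂, Dom δ₁ δ₂ → δ₂ ∈ carrier

/-- The pull back of a set of morphisms with source `X` along `f : X' ⟶ X`. -/
def pullSet {X' X : D} (f : X' ⟶ X) (S : Set (MorFrom X)) : Set (MorFrom X') :=
  {δ' | ∃ δ ∈ S, δ' = ⟨δ.1, f ≫ δ.2⟩}

/-- The pull back of a projective filtration along `f : X' ⟶ X`. -/
def ProjFilt.pull {X' X : D} (f : X' ⟶ X) (P : ProjFilt X) : ProjFilt X' where
  carrier := pullSet f P.carrier
  nonempty' := by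
    obtain ⟨δ, hδ⟩ := P.nonempty'
    exact ⟨⟨δ.1, f ≫ δ.2⟩, δ, hδ, rfl⟩
  directed' := by
    rintro _ ⟨δ₁, h₁, rfl⟩ _ ⟨δ₂, h₂, rfl⟩
    obtain ⟨δ, hδ, ⟨g₁, hg₁⟩, ⟨g₂, hg₂⟩⟩ := P.directed' δ₁ h₁ δ₂ h₂
    exact ⟨⟨δ.1, f ≫ δ.2⟩, ⟨δ, hδ, rfl⟩,
      ⟨g₁, by simp [hg₁]⟩, ⟨g₂, by simp [hg₂]⟩⟩
  saturated' := by
    rintro _ ⟨δ, hδ, rfl⟩ δ₂ ⟨h, hh⟩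
    refine ⟨⟨δ₂.1, δ.2 ≫ h⟩, P.saturated' δ hδ _ ⟨h, rfl⟩, ?_⟩
    obtain ⟨Y₂, g₂⟩ := δ₂
    have hg : g₂ = f ≫ (δ.2 ≫ h) := by simpa using hh.symm
    exact Sigma.ext rfl (heq_of_eq hg)

/-- A projectively filtered object of `D`. -/
structure PObj (D : Type u) [Category.{v} D] where
  base : D
  filt : ProjFilt base

/-- A morphism of projectively filtered objects: a morphism of the underlying
objects such that the pull back of the target filtration is contained in the
source filtration. -/
structure PHom (A B : PObj D) : Type v where
  toHom : A.base ⟶ B.base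
  mem : ∀ δ ∈ B.filt.carrier, (⟨δ.1, toHom ≫ δ.2⟩ : MorFrom A.base) ∈ A.filt.carrier

theorem PHom.ext' {A B : PObj D} {f g : PHom A B} (h : f.toHom = g.toHom) : f = g := by
  cases f; cases g; cases h; rfl

instance : Category.{v} (PObj D) where
  Hom := PHom
  id A := ⟨𝟙 A.base, fun δ hδ => by rw [Category.id_comp]; exact hδ⟩
  comp {A B C} f g := ⟨f.toHom ≫ g.toHom, fun δ hδ => by
    have h1 := g.mem δ hδ
    have h2 := f.mem _ h1
    simpa using h2⟩
  id_comp f := PHom.ext' (Category.id_comp _)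
  comp_id f := PHom.ext' (Category.comp_id _)
  assoc f g h := PHom.ext' (Category.assoc _ _ _)

@[simp] theorem PObj.id_toHom (A : PObj D) : PHom.toHom (𝟙 A) = 𝟙 A.base := rfl
@[simp] theorem PObj.comp_toHom {A B C : PObj D} (f : A ⟶ B) (g : B ⟶ C) :
    PHom.toHom (f ≫ g) = PHom.toHom f ≫ PHom.toHom g := rfl

/-- The forgetful functor `PD → D`. -/
def Pforget (D : Type u) [Category.{v} D] : PObj D ⥤ D where
  obj A := A.base
  map f := PHom.toHom f

/-- The discrete filtration functor `D → PD`, `X ↦ (X, M(X))`. -/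
def Pdiscrete (D : Type u) [Category.{v} D] : D ⥤ PObj D where
  obj X :=
    { base := X
      filt :=
        { carrier := Set.univ
          nonempty' := ⟨⟨X, 𝟙 X⟩, trivial⟩
          directed' := fun δ₁ _ δ₂ _ =>
            ⟨⟨X, 𝟙 X⟩, trivial, ⟨δ₁.2, Category.id_comp _⟩, ⟨δ₂.2, Category.id_comp _⟩⟩
          saturated' := fun _ _ _ _ => trivial } }
  map f := ⟨f, fun _ _ => trivial⟩

/-- The functor `PD → PE` induced by a functor `G : D → E`. -/
def Pfunctor {E : Type u₂} [Category.{v₂} E] (G : D ⥤ E) : PObj D ⥤ PObj E where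
  obj A :=
    { base := G.obj A.base
      filt :=
        { carrier := {δ' | ∃ δ ∈ A.filt.carrier,
            Dom (⟨G.obj δ.1, G.map δ.2⟩ : MorFrom (G.obj A.base)) δ'}
          nonempty' := by
            obtain ⟨δ, hδ⟩ := A.filt.nonempty'
            exact ⟨⟨G.obj δ.1, G.map δ.2⟩, δ, hδ, ⟨𝟙 _, Category.comp_id _⟩⟩
          directed' := by
            rintro δ'₁ ⟨δ₁, h₁, g₁, hg₁⟩ δ'₂ ⟨δ₂, h₂, g₂, hg₂⟩
            obtain ⟨δ, hδ, ⟨k₁, hk₁⟩, ⟨k₂, hk₂⟩⟩ := A.filt.directed' δ₁ h₁ δ₂ h₂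
            refine ⟨⟨G.obj δ.1, G.map δ.2⟩, ⟨δ, hδ, ⟨𝟙 _, Category.comp_id _⟩⟩,
              ⟨G.map k₁ ≫ g₁, ?_⟩, ⟨G.map k₂ ≫ g₂, ?_⟩⟩
            · rw [← Category.assoc, ← G.map_comp, hk₁, hg₁]
            · rw [← Category.assoc, ← G.map_comp, hk₂, hg₂]
          saturated' := by
            rintro δ'₁ ⟨δ, hδ, g, hg⟩ δ'₂ ⟨h, hh⟩
            exact ⟨δ, hδ, ⟨g ≫ h, by rw [← Category.assoc, hg, hh]⟩⟩ } }
  map {A B} f :=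
    ⟨G.map (PHom.toHom f), by
      rintro δ' ⟨δ, hδ, g, hg⟩
      exact ⟨⟨δ.1, PHom.toHom f ≫ δ.2⟩, f.mem δ hδ,
        ⟨g, by rw [← hg, ← Category.assoc, ← G.map_comp]⟩⟩⟩
  map_id A := PHom.ext' (G.map_id _)
  map_comp f g := PHom.ext' (G.map_comp _ _)

/-- An extremal epimorphism: an epimorphism such that in any factorisation
through a monomorphism, the monomorphism is an isomorphism. -/
def ExtremalEpi {C : Type u₂} [Category.{v₂} C] {X Y : C} (e : X ⟶ Y) : Prop :=
  Epi e ∧ ∀ ⦃Z : C⦄ (g : X ⟶ Z) (m : Z ⟶ Y), Mono m → g ≫ m = e → IsIso m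

/-- An (extremal epi, mono) category: every morphism factors as an extremal
epimorphism followed by a monomorphism and such factorisations have the
diagonal fill-in property. -/
structure EMCat (C : Type u₂) [Category.{v₂} C] : Prop where
  fact : ∀ {X Y : C} (f : X ⟶ Y), ∃ (Z : C) (e : X ⟶ Z) (m : Z ⟶ Y),
    ExtremalEpi e ∧ Mono m ∧ e ≫ m = f
  diag : ∀ {A B Z X : C} (e : A ⟶ B) (m : Z ⟶ X) (g : A ⟶ Z) (h : B ⟶ X),
    ExtremalEpi e → Mono m → g ≫ m = e ≫ h → ∃ d : B ⟶ Z, e ≫ d = g ∧ d ≫ m = h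

/-- A projective filtration is reduced if it has an initial subclass of
extremal epimorphisms. -/
def ProjFilt.Reduced {X : D} (P : ProjFilt X) : Prop :=
  ∀ δ ∈ P.carrier, ∃ ε ∈ P.carrier, ExtremalEpi ε.2 ∧ Dom ε δ

/-- The category of reduced projectively filtered objects of `D`. -/
def QObj (D : Type u) [Category.{v} D] := ObjectProperty.FullSubcategory (fun A : PObj D => A.filt.Reduced)

instance : Category.{v} (QObj D) := ObjectProperty.FullSubcategory.category _

/-- The inclusion functor `QD → PD`. -/
def qpInclusion (D : Type u) [Category.{v} D] : QObj D ⥤ PObj D :=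
  ObjectProperty.ι _

/-- A category is extremally co-well-powered if every object has, up to
isomorphism, only a (small) set of extremal epimorphisms out of it. -/
def ECWP (C : Type u₂) [Category.{v₂} C] : Prop :=
  ∀ X : C, ∃ (ι : Type v₂) (Y : ι → C) (e : ∀ i, X ⟶ Y i),
    (∀ i, ExtremalEpi (e i)) ∧
    ∀ ⦃Z : C⦄ (f : X ⟶ Z), ExtremalEpi f → ∃ (i : ι) (φ : Y i ≅ Z), e i ≫ φ.hom = f

/-- The category `(P, D)` associated to a projective filtration: objects are the
elements of `P`, morphisms `δ₁ → δ₂` are morphisms `g` of `D` with `g ∘ δ₁ = δ₂`. -/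
def FiltCat {X : D} (P : ProjFilt X) : Type (max u v) := {δ : MorFrom X // δ ∈ P.carrier}

instance {X : D} (P : ProjFilt X) : Category.{v} (FiltCat P) where
  Hom δ₁ δ₂ := {g : δ₁.1.1 ⟶ δ₂.1.1 // δ₁.1.2 ≫ g = δ₂.1.2}
  id δ := ⟨𝟙 _, Category.comp_id _⟩
  comp f g := ⟨f.1 ≫ g.1, by rw [← Category.assoc, f.2, g.2]⟩
  id_comp f := Subtype.ext (Category.id_comp _)
  comp_id f := Subtype.ext (Category.comp_id _)
  assoc f g h := Subtype.ext (Category.assoc _ _ _)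

/-- The functor `(P, D) → D` sending an element of the filtration to its target. -/
def FiltDiagram {X : D} (P : ProjFilt X) : FiltCat P ⥤ D where
  obj δ := δ.1.1
  map g := g.1

/-- The canonical cone on the diagram of a projective filtration, with apex the
underlying object. -/
def filtCone {X : D} (P : ProjFilt X) : Limits.Cone (FiltDiagram P) where
  pt := X
  π :=
    { app := fun δ => δ.1.2
      naturality := fun δ₁ δ₂ g => by
        have := g.2
        dsimp [FiltDiagram] at *
        simp [this] }

/-- A reduced projective filtration is an iso-filtration if the canonical cone
on its diagram is a limit cone, i.e. the limit exists and the canonical morphism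
from the underlying object to it is an isomorphism. -/
def IsoFilt {X : D} (P : ProjFilt X) : Prop :=
  Nonempty (Limits.IsLimit (filtCone P))

/-- The category of iso-filtered objects of `D`. -/
def KObj (D : Type u) [Category.{v} D] :=
  ObjectProperty.FullSubcategory (fun A : QObj D => IsoFilt A.obj.filt)

instance : Category.{v} (KObj D) := ObjectProperty.FullSubcategory.category _

/-- The inclusion functor `KD → QD`. -/
def kqInclusion (D : Type u) [Category.{v} D] : KObj D ⥤ QObj D :=
  ObjectProperty.ι _

/-- The forgetful functor `KD → D`. -/
def Kforget (D : Type u) [Category.{v} D] : KObj D ⥤ D :=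
  kqInclusion D ⋙ qpInclusion D ⋙ Pforget D

/-- The smallest projective filtration containing a class of morphisms
(as a class). -/
def genSet {X : D} (S : Set (MorFrom X)) : Set (MorFrom X) :=
  {δ | ∀ P : ProjFilt X, S ⊆ P.carrier → δ ∈ P.carrier}

/-- The reduction of a class of morphisms: the saturation of the class of
extremal epimorphism parts of (extremal epi, mono)-factorisations of its
elements. -/
def redSet {X : D} (S : Set (MorFrom X)) : Set (MorFrom X) :=
  {δ | ∃ ε : MorFrom X, ExtremalEpi ε.2 ∧
    (∃ δ' ∈ S, ∃ m : ε.1 ⟶ δ'.1, Mono m ∧ ε.2 ≫ m = δ'.2) ∧ Dom ε δ}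

/-- The push forward of a filtration class along `f` (single morphism case). -/
def pushSet {X Y : D} (f : X ⟶ Y) (S : Set (MorFrom X)) : Set (MorFrom Y) :=
  {g | (⟨g.1, f ≫ g.2⟩ : MorFrom X) ∈ S}

/-- The discrete filtration on an object, as an iso-filtered object. -/
def kDiscreteObj (X : D) : KObj D where
  obj :=
    { obj := (Pdiscrete D).obj X
      property := fun δ _ => ⟨⟨X, 𝟙 X⟩, trivial,
        ⟨(inferInstance : Epi (𝟙 X)), fun _ g m hm hgm => by
          haveI : IsSplitEpi m := ⟨⟨⟨g, hgm⟩⟩⟩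
          exact isIso_of_mono_of_isSplitEpi m⟩,
        ⟨δ.2, Category.id_comp _⟩⟩ }
  property := ⟨{
    lift := fun c => c.π.app ⟨⟨X, 𝟙 X⟩, trivial⟩
    fac := fun c j => by
      have h := c.π.naturality (X := ⟨⟨X, 𝟙 X⟩, trivial⟩) (Y := j)
        ⟨j.1.2, Category.id_comp _⟩
      dsimp [FiltDiagram, filtCone] at h ⊢
      exact h.symm.trans (Category.id_comp _)
    uniq := fun c m hm => by
      have h := hm ⟨⟨X, 𝟙 X⟩, trivial⟩
      rw [← Category.comp_id m]
      exact h }⟩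

/-- The discrete filtration functor `D → KD`. -/
def kDiscrete (D : Type u) [Category.{v} D] : D ⥤ KObj D where
  obj X := kDiscreteObj X
  map f := ⟨f, fun _ _ => trivial⟩
  map_id _ := rfl
  map_comp _ _ := rfl

/-- The morphism in `KD` from an iso-filtered object to the discrete object on
the target of an element of its filtration. -/
def kToDiscrete {A : KObj D} (δ : MorFrom A.obj.obj.base)
    (hδ : δ ∈ A.obj.obj.filt.carrier) : A ⟶ kDiscreteObj δ.1 :=
  ⟨⟨show PHom A.obj.obj ((kDiscreteObj δ.1).obj.obj) from
    ⟨δ.2, fun γ _ => A.obj.obj.filt.saturated' δ hδ _ ⟨γ.2, rfl⟩⟩⟩⟩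

/-- The natural transformation `P(G) → P(H)` induced by `ν : G → H`. -/
def Pnat {E : Type u₂} [Category.{v₂} E] {G H : D ⥤ E} (ν : G ⟶ H) :
    Pfunctor G ⟶ Pfunctor H where
  app A :=
    ⟨ν.app A.base, by
      rintro δ' ⟨δ, hδ, g, hg⟩
      exact ⟨δ, hδ, ⟨ν.app δ.1 ≫ g, by
        rw [← Category.assoc, ν.naturality, Category.assoc, hg]; rfl⟩⟩⟩
  naturality {A B} f := PHom.ext' (ν.naturality (PHom.toHom f))



theorem extremalEpi_comp_isIso {X Y Z : D} {e : X ⟶ Y} (he : ExtremalEpi e) (m : Y ⟶ Z)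
    (hm : IsIso m) : ExtremalEpi (e ≫ m) := by
  haveI := he.1
  refine ⟨epi_comp _ _, ?_⟩
  intro W g m' hm' hfac
  have h1 : g ≫ (m' ≫ inv m) = e := by
    rw [← Category.assoc, hfac, Category.assoc, IsIso.hom_inv_id, Category.comp_id]
  haveI : Mono (m' ≫ inv m) := mono_comp _ _
  haveI : IsIso (m' ≫ inv m) := he.2 g (m' ≫ inv m) inferInstance h1
  have : m' = (m' ≫ inv m) ≫ m := by simp
  rw [this]
  infer_instance

/-- Existence of the limit of the diagram of a reduced projective filtration. -/
theorem exists_redLimitCone [Limits.HasLimits D] (hecwp : ECWP D) {X : D} (Q : ProjFilt X)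
    (hred : Q.Reduced) : Nonempty (Limits.LimitCone (FiltDiagram Q)) := by
  classical
  obtain ⟨ι, Y, e, he, hcov⟩ := hecwp X
  let Fo : {i : ι // @Membership.mem (MorFrom X) _ _ Q.carrier ⟨Y i, e i⟩} → FiltCat Q :=
    fun i => ⟨⟨Y i.1, e i.1⟩, i.2⟩
  let J := InducedCategory (FiltCat Q) Fo
  let G : J ⥤ D := inducedFunctor Fo ⋙ FiltDiagram Q
  let cJ : Limits.Cone G := Limits.limit.cone G
  have hJ : Limits.IsLimit cJ := Limits.limit.isLimit G
  have hmemS : ∀ (ε : MorFrom X), ε ∈ Q.carrier → ExtremalEpi ε.2 →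
      ∃ (i : ι) (φ : Y i ≅ ε.1), e i ≫ φ.hom = ε.2 ∧
        @Membership.mem (MorFrom X) _ _ Q.carrier ⟨Y i, e i⟩ := by
    intro ε hε hεe
    obtain ⟨i, φ, hφ⟩ := hcov ε.2 hεe
    exact ⟨i, φ, hφ, Q.saturated' ε hε _ ⟨φ.inv, by
      rw [← hφ, Category.assoc, φ.hom_inv_id, Category.comp_id]⟩⟩
  have hex : ∀ δ : FiltCat Q, ∃ i : J, Nonempty (Fo i ⟶ δ) := by
    intro δ
    obtain ⟨ε, hε, hεe, k, hk⟩ := hred δ.1 δ.2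
    obtain ⟨i, φ, hφ, hmem⟩ := hmemS ε hε hεe
    refine ⟨⟨i, hmem⟩, ⟨⟨φ.hom ≫ k, ?_⟩⟩⟩
    show e i ≫ φ.hom ≫ k = δ.1.2
    rw [← Category.assoc, hφ, hk]
  choose idx arrN using hex
  let arr : ∀ δ : FiltCat Q, Fo (idx δ) ⟶ δ := fun δ => (arrN δ).some
  have key : ∀ (δ : FiltCat Q) (i₁ i₂ : J) (g₁ : Fo i₁ ⟶ δ) (g₂ : Fo i₂ ⟶ δ),
      cJ.π.app i₁ ≫ g₁.1 = cJ.π.app i₂ ≫ g₂.1 := by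
    intro δ i₁ i₂ g₁ g₂
    obtain ⟨δ₀, hδ₀, ⟨h₁, hh₁⟩, ⟨h₂, hh₂⟩⟩ := Q.directed' (Fo i₁).1 i₁.2 (Fo i₂).1 i₂.2
    obtain ⟨ε, hε, hεe, k, hk⟩ := hred δ₀ hδ₀
    obtain ⟨i, φ, hφ, hmem⟩ := hmemS ε hε hεe
    let iS : J := ⟨i, hmem⟩
    have cond : ∀ (δ' : MorFrom X) (h : δ₀.1 ⟶ δ'.1), δ₀.2 ≫ h = δ'.2 →
        e i ≫ φ.hom ≫ k ≫ h = δ'.2 := by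
      intro δ' h hh
      calc e i ≫ φ.hom ≫ k ≫ h = ((e i ≫ φ.hom) ≫ k) ≫ h := by simp
        _ = δ'.2 := by rw [hφ, hk, hh]
    let k₁ : Fo iS ⟶ Fo i₁ := ⟨φ.hom ≫ k ≫ h₁, cond (Fo i₁).1 h₁ hh₁⟩
    let k₂ : Fo iS ⟶ Fo i₂ := ⟨φ.hom ≫ k ≫ h₂, cond (Fo i₂).1 h₂ hh₂⟩
    haveI : Epi (e i) := (he i).1
    have heq : k₁.1 ≫ g₁.1 = k₂.1 ≫ g₂.1 :=
      (cancel_epi (e i)).mp ((k₁ ≫ g₁).2.trans (k₂ ≫ g₂).2.symm)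
    have w₁ : cJ.π.app iS ≫ k₁.1 = cJ.π.app i₁ := cJ.w (show iS ⟶ i₁ from InducedCategory.homMk k₁)
    have w₂ : cJ.π.app iS ≫ k₂.1 = cJ.π.app i₂ := cJ.w (show iS ⟶ i₂ from InducedCategory.homMk k₂)
    calc cJ.π.app i₁ ≫ g₁.1
        = (cJ.π.app iS ≫ k₁.1) ≫ g₁.1 := (eq_whisker w₁ g₁.1).symm
      _ = cJ.π.app iS ≫ k₁.1 ≫ g₁.1 := Category.assoc _ _ _
      _ = cJ.π.app iS ≫ k₂.1 ≫ g₂.1 := whisker_eq (cJ.π.app iS) heq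
      _ = (cJ.π.app iS ≫ k₂.1) ≫ g₂.1 := (Category.assoc _ _ _).symm
      _ = cJ.π.app i₂ ≫ g₂.1 := eq_whisker w₂ g₂.1
  refine ⟨⟨{ pt := cJ.pt,
             π := { app := fun δ => cJ.π.app (idx δ) ≫ (arr δ).1,
                    naturality := ?_ } }, ?_⟩⟩
  · intro δ δ' h
    have h1 : cJ.π.app (idx δ') ≫ (arr δ').1 = cJ.π.app (idx δ) ≫ ((arr δ) ≫ h).1 :=
      key δ' (idx δ') (idx δ) (arr δ') (arr δ ≫ h)
    have h2 : cJ.π.app (idx δ) ≫ ((arr δ) ≫ h).1 =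
        (cJ.π.app (idx δ) ≫ (arr δ).1) ≫ (FiltDiagram Q).map h := by
      exact (Category.assoc _ _ _).symm
    simp only [Functor.const_obj_map]
    exact (Category.id_comp _).trans (h1.trans h2)
  · let wh : ∀ _s : Limits.Cone (FiltDiagram Q), Limits.Cone G := fun s =>
      { pt := s.pt,
        π := { app := fun i => s.π.app (Fo i),
               naturality := fun i i' g => s.π.naturality (show Fo i ⟶ Fo i' from g.hom) } }
    refine { lift := fun s => hJ.lift (wh s), fac := ?_, uniq := ?_ }
    · intro s δ
      refine (Category.assoc _ _ _).symm.trans ((eq_whisker (hJ.fac (wh s) (idx δ)) _).trans ?_)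
      exact s.w (arr δ)
    · intro s m hm
      refine hJ.uniq (wh s) m ?_
      intro i
      have h1 := hm (Fo i)
      have h3 : cJ.π.app (idx (Fo i)) ≫ (arr (Fo i)).1 = cJ.π.app i := by
        rw [key (Fo i) (idx (Fo i)) i (arr (Fo i))
          (⟨𝟙 ((Fo i).1.1), Category.comp_id _⟩ : Fo i ⟶ Fo i)]
        exact Category.comp_id _
      rw [← h3]
      exact h1

section KConstr

variable [Limits.HasLimits D]
variable (LC : ∀ A : QObj D, Limits.LimitCone (FiltDiagram A.obj.filt))

/-- Constructor for objects of `(Q,D)`. -/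
@[reducible] def mkJ {X : D} (Q : ProjFilt X) (δ : MorFrom X) (h : δ ∈ Q.carrier) : FiltCat Q := ⟨δ, h⟩

/-- Constructor for morphisms of `(Q,D)`. -/
@[reducible] def mkHom {X : D} {Q : ProjFilt X} {j j' : FiltCat Q} (k : j.1.1 ⟶ j'.1.1)
    (hk : j.1.2 ≫ k = j'.1.2) : j ⟶ j' := ⟨k, hk⟩

theorem wApp (A : QObj D) {j j' : FiltCat A.obj.filt} (k : j.1.1 ⟶ j'.1.1)
    (hk : j.1.2 ≫ k = j'.1.2) :
    (LC A).cone.π.app j ≫ k = (LC A).cone.π.app j' :=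
  (LC A).cone.w (mkHom k hk)

/-- The canonical element of the limit filtration attached to `j`. -/
@[reducible] def toP (A : QObj D) (j : FiltCat A.obj.filt) : MorFrom (LC A).cone.pt :=
  ⟨j.1.1, (LC A).cone.π.app j⟩

/-- The limit filtration. -/
def Kfilt (A : QObj D) : ProjFilt (LC A).cone.pt where
  carrier := {δ' | ∃ j, δ' = toP LC A j}
  nonempty' := by
    obtain ⟨δ, hδ⟩ := A.obj.filt.nonempty'
    exact ⟨toP LC A (mkJ _ δ hδ), mkJ _ δ hδ, rfl⟩
  directed' := by
    rintro _ ⟨j₁, rfl⟩ _ ⟨j₂, rfl⟩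
    obtain ⟨δ, hδ, ⟨g₁, hg₁⟩, ⟨g₂, hg₂⟩⟩ := A.obj.filt.directed' j₁.1 j₁.2 j₂.1 j₂.2
    exact ⟨toP LC A (mkJ _ δ hδ), ⟨mkJ _ δ hδ, rfl⟩,
      ⟨g₁, wApp LC A (j := mkJ _ δ hδ) (j' := j₁) g₁ hg₁⟩,
      ⟨g₂, wApp LC A (j := mkJ _ δ hδ) (j' := j₂) g₂ hg₂⟩⟩
  saturated' := by
    rintro _ ⟨j, rfl⟩ δ₂ ⟨h, hh⟩
    have hmem : (⟨δ₂.1, j.1.2 ≫ h⟩ : MorFrom _) ∈ A.obj.filt.carrier :=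
      A.obj.filt.saturated' j.1 j.2 ⟨δ₂.1, j.1.2 ≫ h⟩ ⟨h, rfl⟩
    refine ⟨mkJ _ ⟨δ₂.1, j.1.2 ≫ h⟩ hmem, ?_⟩
    have hw : (LC A).cone.π.app j ≫ h =
        (LC A).cone.π.app (mkJ _ ⟨δ₂.1, j.1.2 ≫ h⟩ hmem) :=
      wApp LC A (j := j) (j' := mkJ _ ⟨δ₂.1, j.1.2 ≫ h⟩ hmem) h rfl
    exact Sigma.ext rfl (heq_of_eq (hh.symm.trans hw))

/-- The canonical morphism `X ⟶ lim Q`. -/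
noncomputable def uMor (A : QObj D) : A.obj.base ⟶ (LC A).cone.pt :=
  (LC A).isLimit.lift (filtCone A.obj.filt)

theorem uMor_fac (A : QObj D) (j : FiltCat A.obj.filt) :
    uMor LC A ≫ (LC A).cone.π.app j = j.1.2 :=
  (LC A).isLimit.fac (filtCone A.obj.filt) j

theorem Kfilt_reduced (hEM : EMCat D) (A : QObj D) : (Kfilt LC A).Reduced := by
  rintro _ ⟨j, rfl⟩
  obtain ⟨ε, hε, hεe, g, hg⟩ := A.property j.1 j.2
  refine ⟨toP LC A (mkJ _ ε hε), ⟨mkJ _ ε hε, rfl⟩, ?_,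
    ⟨g, wApp LC A (j := mkJ _ ε hε) (j' := j) g hg⟩⟩
  obtain ⟨Z, e', m, he', hm, hfac⟩ := hEM.fact ((LC A).cone.π.app (mkJ _ ε hε))
  have hu : uMor LC A ≫ (LC A).cone.π.app (mkJ _ ε hε) = ε.2 := uMor_fac LC A (mkJ _ ε hε)
  have : IsIso m := hεe.2 (uMor LC A ≫ e') m hm (by erw [Category.assoc, hfac, hu])
  show ExtremalEpi ((LC A).cone.π.app (mkJ _ ε hε))
  rw [← hfac]
  exact extremalEpi_comp_isIso he' m this

/-- The image of `K` as a reduced projectively filtered object. -/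
noncomputable def KP (hEM : EMCat D) (A : QObj D) : QObj D where
  obj := ⟨(LC A).cone.pt, Kfilt LC A⟩
  property := Kfilt_reduced LC hEM A

/-- The index comparison functor data: the whiskered cone. -/
def whiskKP (A : QObj D) (s : Limits.Cone (FiltDiagram (Kfilt LC A))) :
    Limits.Cone (FiltDiagram A.obj.filt) where
  pt := s.pt
  π := { app := fun j => s.π.app (mkJ (Kfilt LC A) (toP LC A j) ⟨j, rfl⟩),
         naturality := fun j j' g =>
           s.π.naturality (show mkJ (Kfilt LC A) (toP LC A j) ⟨j, rfl⟩ ⟶ mkJ (Kfilt LC A) (toP LC A j') ⟨j', rfl⟩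
             from mkHom g.1 ((LC A).cone.w g)) }

theorem KP_isoFilt (A : QObj D) : IsoFilt (Kfilt LC A) := by
  refine ⟨{ lift := fun s => (LC A).isLimit.lift (whiskKP LC A s),
            fac := ?_, uniq := ?_ }⟩
  · rintro s ⟨δ', j, rfl⟩
    exact (LC A).isLimit.fac _ j
  · intro s m hm
    exact (LC A).isLimit.uniq (whiskKP LC A s) m
      (fun j => hm (mkJ (Kfilt LC A) (toP LC A j) ⟨j, rfl⟩))

/-- The pulled-back index. -/
@[reducible] def pullJ {A B : QObj D} (f : A ⟶ B) (j : FiltCat B.obj.filt) : FiltCat A.obj.filt :=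
  mkJ _ ⟨j.1.1, f.hom.toHom ≫ j.1.2⟩ (f.hom.mem j.1 j.2)

/-- the cone used to define `K.map f`. -/
def mapConeF {A B : QObj D} (f : A ⟶ B) : Limits.Cone (FiltDiagram B.obj.filt) where
  pt := (LC A).cone.pt
  π := { app := fun j => (LC A).cone.π.app (pullJ f j),
         naturality := fun j j' g => by
           have hw : (LC A).cone.π.app (pullJ f j) ≫ g.1 = (LC A).cone.π.app (pullJ f j') :=
             wApp LC A (j := pullJ f j) (j' := pullJ f j') g.1
               (by show (f.hom.toHom ≫ j.1.2) ≫ g.1 = f.hom.toHom ≫ j'.1.2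
                   rw [Category.assoc, g.2])
           exact (Category.id_comp _).trans hw.symm }

/-- The underlying morphism of `K.map f`. -/
noncomputable def KmapHom {A B : QObj D} (f : A ⟶ B) : (LC A).cone.pt ⟶ (LC B).cone.pt :=
  (LC B).isLimit.lift (mapConeF LC f)

theorem KmapHom_fac {A B : QObj D} (f : A ⟶ B) (j : FiltCat B.obj.filt) :
    KmapHom LC f ≫ (LC B).cone.π.app j = (LC A).cone.π.app (pullJ f j) :=
  (LC B).isLimit.fac (mapConeF LC f) j

/-- `K.map f` as a morphism of filtered objects. -/
noncomputable def Kmap (hEM : EMCat D) {A B : QObj D} (f : A ⟶ B) :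
    KP LC hEM A ⟶ KP LC hEM B :=
  ObjectProperty.homMk (show PHom _ _ from
  ⟨KmapHom LC f, by
    rintro _ ⟨j, rfl⟩
    exact ⟨pullJ f j, Sigma.ext rfl (heq_of_eq (KmapHom_fac LC f j))⟩⟩)

/-- The functor `K : QD ⥤ KD`. -/
noncomputable def Kfunctor (hEM : EMCat D) : QObj D ⥤ KObj D where
  obj A := ⟨KP LC hEM A, KP_isoFilt LC A⟩
  map f := ObjectProperty.homMk (Kmap LC hEM f)
  map_id A := by
    apply ObjectProperty.hom_ext
    apply ObjectProperty.hom_ext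
    apply PHom.ext'
    apply (LC A).isLimit.hom_ext
    intro j
    show KmapHom LC (𝟙 A) ≫ _ = 𝟙 _ ≫ _
    rw [KmapHom_fac, Category.id_comp]
    exact (Category.comp_id _).symm.trans
      (wApp LC A (j := pullJ (𝟙 A) j) (j' := j) (𝟙 j.1.1)
        (by show ((𝟙 A : A ⟶ A).hom.toHom ≫ j.1.2) ≫ 𝟙 j.1.1 = j.1.2
            rw [Category.comp_id]
            exact Category.id_comp _))
  map_comp {A B C} f g := by
    apply ObjectProperty.hom_ext
    apply ObjectProperty.hom_ext
    apply PHom.ext'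
    apply (LC C).isLimit.hom_ext
    intro j
    show KmapHom LC (f ≫ g) ≫ _ = (KmapHom LC f ≫ KmapHom LC g) ≫ _
    erw [KmapHom_fac, Category.assoc, KmapHom_fac, KmapHom_fac]
    exact (Category.comp_id _).symm.trans
      (wApp LC A (j := pullJ (f ≫ g) j) (j' := pullJ f (pullJ g j)) (𝟙 j.1.1)
        (by show ((f ≫ g).hom.toHom ≫ j.1.2) ≫ 𝟙 j.1.1 = f.hom.toHom ≫ g.hom.toHom ≫ j.1.2
            rw [Category.comp_id, ← Category.assoc]
            rfl))

/-- The unit of the adjunction. -/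
noncomputable def Kunit (hEM : EMCat D) (A : QObj D) : A ⟶ KP LC hEM A :=
  ObjectProperty.homMk (show PHom _ _ from
  ⟨uMor LC A, by
    rintro _ ⟨j, rfl⟩
    show (⟨j.1.1, uMor LC A ≫ (LC A).cone.π.app j⟩ : MorFrom _) ∈ A.obj.filt.carrier
    erw [uMor_fac]
    exact j.2⟩)

/-- The underlying morphism of the counit. -/
noncomputable def counitHom (B : KObj D) : (LC B.obj).cone.pt ⟶ B.obj.obj.base :=
  B.property.some.lift (LC B.obj).cone

theorem counitHom_fac (B : KObj D) (j : FiltCat B.obj.obj.filt) :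
    counitHom LC B ≫ j.1.2 = (LC B.obj).cone.π.app j :=
  B.property.some.fac (LC B.obj).cone j

/-- The counit of the adjunction. -/
noncomputable def Kcounit (hEM : EMCat D) (B : KObj D) :
    (Kfunctor LC hEM).obj ((kqInclusion D).obj B) ⟶ B :=
  ObjectProperty.homMk (ObjectProperty.homMk (show PHom _ _ from
  ⟨counitHom LC B, by
    intro δ hδ
    exact ⟨mkJ _ δ hδ, Sigma.ext rfl (heq_of_eq (counitHom_fac LC B (mkJ _ δ hδ)))⟩⟩))

theorem counit_naturality (hEM : EMCat D) {B B' : KObj D} (g : B ⟶ B') :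
    KmapHom LC g.hom ≫ counitHom LC B' =
      counitHom LC B ≫ g.hom.hom.toHom := by
  apply B'.property.some.hom_ext
  intro j
  show _ ≫ j.1.2 = _ ≫ j.1.2
  erw [Category.assoc, counitHom_fac, KmapHom_fac, Category.assoc]
  exact (counitHom_fac LC B (pullJ g.hom j)).symm

theorem right_tri (B : KObj D) :
    uMor LC B.obj ≫ counitHom LC B = 𝟙 B.obj.obj.base := by
  apply B.property.some.hom_ext
  intro j
  show _ ≫ j.1.2 = _ ≫ j.1.2
  erw [Category.assoc, counitHom_fac, uMor_fac, Category.id_comp]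

theorem counit_unit (B : KObj D) :
    counitHom LC B ≫ uMor LC B.obj = 𝟙 (LC B.obj).cone.pt := by
  apply (LC B.obj).isLimit.hom_ext
  intro j
  erw [Category.assoc, uMor_fac, counitHom_fac, Category.id_comp]

theorem left_tri (hEM : EMCat D) (A : QObj D) :
    KmapHom LC (Kunit LC hEM A) ≫ counitHom LC ⟨KP LC hEM A, KP_isoFilt LC A⟩ =
      𝟙 ((LC A).cone.pt) := by
  apply (LC A).isLimit.hom_ext
  intro j
  erw [Category.assoc, Category.id_comp]
  have h1 : counitHom LC ⟨KP LC hEM A, KP_isoFilt LC A⟩ ≫ (LC A).cone.π.app j =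
      (LC (KP LC hEM A)).cone.π.app (mkJ (Kfilt LC A) (toP LC A j) ⟨j, rfl⟩) :=
    counitHom_fac LC ⟨KP LC hEM A, KP_isoFilt LC A⟩ (mkJ (Kfilt LC A) (toP LC A j) ⟨j, rfl⟩)
  erw [h1, KmapHom_fac]
  exact (Category.comp_id _).symm.trans
    (wApp LC A (j := pullJ (Kunit LC hEM A) (mkJ (Kfilt LC A) (toP LC A j) ⟨j, rfl⟩))
      (j' := j) (𝟙 j.1.1)
      (by rw [Category.comp_id]; exact uMor_fac LC A j))

end KConstr

/-- for `D` complete, extremally co-well-powered and (extremal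
epi, mono), there is a lift `K : QD → KD` of the projective limit functor
(the underlying object of `K(X,Q)` is `lim Q`, filtered by the canonical
morphisms `lim Q → X_δ` for `δ ∈ Q`), left adjoint to the inclusion
`KD → QD`, and `K` composed with the inclusion is naturally isomorphic to the
identity functor of `KD`. -/
theorem filtered_projective_limit_functor [Limits.HasLimits D]
    (hecwp : ECWP D) (hEM : EMCat D) :
    ∃ K : QObj D ⥤ KObj D,
      Nonempty (K ⊣ kqInclusion D) ∧
      Nonempty (kqInclusion D ⋙ K ≅ 𝟭 (KObj D)) ∧
      ∀ A : QObj D, ∃ (c : Limits.Cone (FiltDiagram A.obj.filt))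
        (_ : Limits.IsLimit c) (h : c.pt = (K.obj A).obj.obj.base),
          (K.obj A).obj.obj.filt.carrier =
            {δ' : MorFrom ((K.obj A).obj.obj.base) |
              ∃ j : FiltCat A.obj.filt, δ' = ⟨j.1.1, eqToHom h.symm ≫ c.π.app j⟩} := by
  classical
  have hc : ∀ A : QObj D, Nonempty (Limits.LimitCone (FiltDiagram A.obj.filt)) :=
    fun A => exists_redLimitCone hecwp A.obj.filt A.property
  let LC : ∀ A : QObj D, Limits.LimitCone (FiltDiagram A.obj.filt) := fun A => (hc A).some
  refine ⟨Kfunctor LC hEM, ⟨Adjunction.mkOfUnitCounit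
    { unit := { app := fun A => Kunit LC hEM A,
                naturality := fun A A' f => ?_ },
      counit := { app := fun B => Kcounit LC hEM B,
                  naturality := fun B B' g => ObjectProperty.hom_ext _ (ObjectProperty.hom_ext _ (PHom.ext' (counit_naturality LC hEM g))) },
      left_triangle := ?_,
      right_triangle := ?_ }⟩, ⟨NatIso.ofComponents
    (fun B => { hom := Kcounit LC hEM B,
                inv := ObjectProperty.homMk (Kunit LC hEM B.obj),
                hom_inv_id := ObjectProperty.hom_ext _ (ObjectProperty.hom_ext _ (PHom.ext' (counit_unit LC B))),
                inv_hom_id := ObjectProperty.hom_ext _ (ObjectProperty.hom_ext _ (PHom.ext' (right_tri LC B))) })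
    (fun {B B'} g => ObjectProperty.hom_ext _ (ObjectProperty.hom_ext _ (PHom.ext' (counit_naturality LC hEM g))))⟩, ?_⟩
  · apply ObjectProperty.hom_ext
    apply PHom.ext'
    apply (LC A').isLimit.hom_ext
    intro j
    show (f.hom.toHom ≫ uMor LC A') ≫ _ = (uMor LC A ≫ KmapHom LC f) ≫ _
    erw [Category.assoc, Category.assoc, uMor_fac, KmapHom_fac, uMor_fac]
    rfl
  · apply NatTrans.ext
    funext A
    apply ObjectProperty.hom_ext
    apply ObjectProperty.hom_ext
    apply PHom.ext'
    show KmapHom LC (Kunit LC hEM A) ≫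
        𝟙 ((LC (KP LC hEM A)).cone.pt) ≫ counitHom LC ⟨KP LC hEM A, KP_isoFilt LC A⟩ =
      𝟙 ((LC A).cone.pt)
    rw [Category.id_comp]
    exact left_tri LC hEM A
  · apply NatTrans.ext
    funext B
    apply ObjectProperty.hom_ext
    apply PHom.ext'
    show uMor LC B.obj ≫ 𝟙 ((LC B.obj).cone.pt) ≫ counitHom LC B = 𝟙 B.obj.obj.base
    rw [Category.id_comp]
    exact right_tri LC B
  · intro A
    refine ⟨(LC A).cone, (LC A).isLimit, rfl, ?_⟩
    ext δ'
    constructor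
    · rintro ⟨j, rfl⟩
      exact ⟨j, by erw [eqToHom_refl, Category.id_comp]; rfl⟩
    · rintro ⟨j, rfl⟩
      exact ⟨j, by erw [eqToHom_refl, Category.id_comp]; rfl⟩

end FilteredCats
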